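/- Let H0 and H1 be complex Hilbert spaces, let A0 on H0 and A1 on H1 be bounded self-adjoint operators, let B : H1 → H0 be a bounded operator, and let L be the block operator matrix on H = H0 ⊕ H1 given by L(x0,x1) = (A0 x0 + B x1, −B* x0 + A1 x1). Let J be the involution J(x0,x1) = (x0,−x1) on H. Suppose the bounded operator K : H0 → H1 with ‖K‖ < 1 satisfies K A0 − A1 K + K B K = −B*. Then: (a) the graph subspaces G(K) = {(x0, K x0)} and G*(K) = {(K* x1, x1)} are invariant under L; (b) G(K) and G*(K) are orthogonal with respect to the indefinite inner product [u,v] := ⟪J u, v⟫, i.e. ⟪J u, v⟫ = 0 for all u ∈ G(K), v ∈ G*(K); (c) with γ := (1 − ‖K‖²)/(1 + ‖K‖²) > 0, one has Re⟪J u, u⟫ ≥ γ·‖u‖² for all u ∈ G(K) and Re⟪J v, v⟫ ≤ −γ·‖v‖² for all v ∈ G*(K) (so G(K) is uniformly positive and G*(K) uniformly negative in the Krein space sense). (Bounded-operator version of Theorem 5.2 (ii) of the paper.) -/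

import Mathlib

open ContinuousLinearMap

/-- Bounded-operator version of Theorem 5.2 (ii) of the paper: let `A0`, `A1` be bounded
self-adjoint operators, `B : H1 → H0` bounded, `L(x0,x1) = (A0 x0 + B x1, -B* x0 + A1 x1)`
the block operator matrix on `H = H0 ⊕ H1`, and `J(x0,x1) = (x0, -x1)`. If `K : H0 → H1`
with `‖K‖ < 1` solves `K A0 - A1 K + K B K = -B*`, then the graphs
`G(K) = {(x0, K x0)}` and `G*(K) = {(K* x1, x1)}` are invariant under `L`, mutually
orthogonal w.r.t. the indefinite inner product `[u,v] = ⟪J u, v⟫`, and with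
`γ = (1-‖K‖²)/(1+‖K‖²) > 0` one has `Re⟪J u, u⟫ ≥ γ‖u‖²` on `G(K)` and
`Re⟪J v, v⟫ ≤ -γ‖v‖²` on `G*(K)`. -/
private lemma inner_self_re_aux {E : Type*} [NormedAddCommGroup E] [InnerProductSpace ℂ E]
    (x : E) : ((inner ℂ x x : ℂ)).re = ‖x‖ ^ 2 := by
  rw [← RCLike.re_to_complex, inner_self_eq_norm_sq]

set_option maxHeartbeats 1000000 in
theorem J_selfAdjoint_graph_subspaces_Krein
    {H0 : Type*} [NormedAddCommGroup H0] [InnerProductSpace ℂ H0] [CompleteSpace H0]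
    {H1 : Type*} [NormedAddCommGroup H1] [InnerProductSpace ℂ H1] [CompleteSpace H1]
    (A0 : H0 →L[ℂ] H0) (A1 : H1 →L[ℂ] H1) (B : H1 →L[ℂ] H0)
    (hA0 : IsSelfAdjoint A0) (hA1 : IsSelfAdjoint A1)
    (L : WithLp 2 (H0 × H1) →L[ℂ] WithLp 2 (H0 × H1))
    (hL : ∀ (x0 : H0) (x1 : H1),
      L ((WithLp.equiv 2 (H0 × H1)).symm (x0, x1)) =
        (WithLp.equiv 2 (H0 × H1)).symm (A0 x0 + B x1, -(adjoint B) x0 + A1 x1))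
    (J : WithLp 2 (H0 × H1) →L[ℂ] WithLp 2 (H0 × H1))
    (hJ : ∀ (x0 : H0) (x1 : H1),
      J ((WithLp.equiv 2 (H0 × H1)).symm (x0, x1)) =
        (WithLp.equiv 2 (H0 × H1)).symm (x0, -x1))
    (K : H0 →L[ℂ] H1) (hKnorm : ‖K‖ < 1)
    (hK : K ∘L A0 - A1 ∘L K + (K ∘L B) ∘L K = -(adjoint B)) :
    (∀ u ∈ {x : WithLp 2 (H0 × H1) | ∃ x0 : H0,
        x = (WithLp.equiv 2 (H0 × H1)).symm (x0, K x0)},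
      L u ∈ {x : WithLp 2 (H0 × H1) | ∃ x0 : H0,
        x = (WithLp.equiv 2 (H0 × H1)).symm (x0, K x0)}) ∧
    (∀ v ∈ {x : WithLp 2 (H0 × H1) | ∃ x1 : H1,
        x = (WithLp.equiv 2 (H0 × H1)).symm ((adjoint K) x1, x1)},
      L v ∈ {x : WithLp 2 (H0 × H1) | ∃ x1 : H1,
        x = (WithLp.equiv 2 (H0 × H1)).symm ((adjoint K) x1, x1)}) ∧
    (∀ u ∈ {x : WithLp 2 (H0 × H1) | ∃ x0 : H0,
        x = (WithLp.equiv 2 (H0 × H1)).symm (x0, K x0)},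
      ∀ v ∈ {x : WithLp 2 (H0 × H1) | ∃ x1 : H1,
        x = (WithLp.equiv 2 (H0 × H1)).symm ((adjoint K) x1, x1)},
      (inner ℂ (J u) v : ℂ) = 0) ∧
    ((0 : ℝ) < (1 - ‖K‖ ^ 2) / (1 + ‖K‖ ^ 2) ∧
      (∀ u ∈ {x : WithLp 2 (H0 × H1) | ∃ x0 : H0,
          x = (WithLp.equiv 2 (H0 × H1)).symm (x0, K x0)},
        (1 - ‖K‖ ^ 2) / (1 + ‖K‖ ^ 2) * ‖u‖ ^ 2 ≤ (inner ℂ (J u) u : ℂ).re) ∧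
      (∀ v ∈ {x : WithLp 2 (H0 × H1) | ∃ x1 : H1,
          x = (WithLp.equiv 2 (H0 × H1)).symm ((adjoint K) x1, x1)},
        (inner ℂ (J v) v : ℂ).re ≤ -((1 - ‖K‖ ^ 2) / (1 + ‖K‖ ^ 2)) * ‖v‖ ^ 2)) := by

  -- adjoint form of the Riccati equation
  have hK' : ∀ x1 : H1, A0 ((adjoint K) x1) + B x1 =
      (adjoint K) (-(adjoint B) ((adjoint K) x1) + A1 x1) := by
    have h2 : adjoint (K ∘L A0 - A1 ∘L K + (K ∘L B) ∘L K) = adjoint (-(adjoint B)) :=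
      congrArg _ hK
    simp only [map_add, map_sub, map_neg, adjoint_comp, adjoint_adjoint,
      hA0.adjoint_eq, hA1.adjoint_eq] at h2
    intro x1
    have h3 := congrArg (fun T => T x1) h2
    simp only [add_apply, sub_apply, neg_apply, comp_apply] at h3
    rw [map_add, map_neg]
    have hB : B x1 = -(A0 ((adjoint K) x1) - (adjoint K) (A1 x1)
        + (adjoint K) ((adjoint B) ((adjoint K) x1))) := by
      rw [h3, neg_neg]
    rw [hB]; abel
  have hKpt : ∀ x0 : H0, K (A0 x0 + B (K x0)) = -(adjoint B) x0 + A1 (K x0) := by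
    intro x0
    have h3 := congrArg (fun T => T x0) hK
    simp only [add_apply, sub_apply, neg_apply, comp_apply] at h3
    rw [map_add]
    have : -(adjoint B) x0 = K (A0 x0) - A1 (K x0) + K (B (K x0)) := h3.symm
    rw [this]; abel
  have hknn : (0:ℝ) ≤ ‖K‖ := norm_nonneg K
  have hden : (0:ℝ) < 1 + ‖K‖ ^ 2 := by positivity
  have hγ : (0:ℝ) < (1 - ‖K‖ ^ 2) / (1 + ‖K‖ ^ 2) := by
    apply div_pos _ hden
    nlinarith
  refine ⟨?_, ?_, ?_, hγ, ?_, ?_⟩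
  · rintro u ⟨x0, rfl⟩
    refine ⟨A0 x0 + B (K x0), ?_⟩
    rw [hL, hKpt]
  · rintro v ⟨x1, rfl⟩
    refine ⟨-(adjoint B) ((adjoint K) x1) + A1 x1, ?_⟩
    rw [hL, ← hK']
  · rintro u ⟨x0, rfl⟩ v ⟨x1, rfl⟩
    rw [hJ]
    simp only [WithLp.prod_inner_apply, WithLp.equiv_symm_apply, WithLp.ofLp_toLp,
      inner_neg_left, adjoint_inner_right]
    ring
  · rintro u ⟨x0, rfl⟩
    rw [hJ]
    have hb : ‖K x0‖ ≤ ‖K‖ * ‖x0‖ := K.le_opNorm x0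
    have hnn1 : (0:ℝ) ≤ ‖x0‖ := norm_nonneg _
    have hnn2 : (0:ℝ) ≤ ‖K x0‖ := norm_nonneg _
    have hnorm : ‖(WithLp.equiv 2 (H0 × H1)).symm (x0, K x0)‖ ^ 2
        = ‖x0‖ ^ 2 + ‖K x0‖ ^ 2 := by
      rw [WithLp.prod_norm_sq_eq_of_L2]
      simp
    rw [hnorm]
    simp only [WithLp.prod_inner_apply, WithLp.equiv_symm_apply, WithLp.ofLp_toLp,
      inner_neg_left, Complex.add_re, Complex.neg_re, inner_self_re_aux]
    rw [div_mul_eq_mul_div, div_le_iff₀ hden]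
    nlinarith
  · rintro v ⟨x1, rfl⟩
    rw [hJ]
    have hKa : ‖adjoint K‖ = ‖K‖ := adjoint.norm_map K
    have hb : ‖(adjoint K) x1‖ ≤ ‖K‖ * ‖x1‖ := by
      simpa [hKa] using (adjoint K).le_opNorm x1
    have hnn1 : (0:ℝ) ≤ ‖x1‖ := norm_nonneg _
    have hnn2 : (0:ℝ) ≤ ‖(adjoint K) x1‖ := norm_nonneg _
    have hnorm : ‖(WithLp.equiv 2 (H0 × H1)).symm ((adjoint K) x1, x1)‖ ^ 2
        = ‖(adjoint K) x1‖ ^ 2 + ‖x1‖ ^ 2 := by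
      rw [WithLp.prod_norm_sq_eq_of_L2]
      simp
    rw [hnorm]
    simp only [WithLp.prod_inner_apply, WithLp.equiv_symm_apply, WithLp.ofLp_toLp,
      inner_neg_left, Complex.add_re, Complex.neg_re, inner_self_re_aux]
    have key : (1 - ‖K‖ ^ 2) / (1 + ‖K‖ ^ 2) * (‖(adjoint K) x1‖ ^ 2 + ‖x1‖ ^ 2)
        ≤ ‖x1‖ ^ 2 - ‖(adjoint K) x1‖ ^ 2 := by
      rw [div_mul_eq_mul_div, div_le_iff₀ hden]
      nlinarith
    linarith
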